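/- The polynomials B_n^α satisfy the symmetry B_n^{1−n−α}(t) = B_n^α(t) for all n ≥ 0 and α ∈ ℂ. -/

import Mathlib

open scoped BigOperators

/-- The Pochhammer symbol (rising factorial) (a)_n. -/
noncomputable def poch (a : ℂ) (n : ℕ) : ℂ := (ascPochhammer ℂ n).eval a

/-- ω = e^{2πi/3}. -/
noncomputable def ω : ℂ := Complex.exp (2 * Real.pi * Complex.I / 3)

/-- The polynomials B_n^α(t). -/
noncomputable def Ba (α t : ℂ) (n : ℕ) : ℂ :=
  (1 / (Nat.factorial n : ℂ)) * ∑ k ∈ Finset.range (n + 1),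
    poch (ω * t) k * poch (ω ^ 2 * t) k * poch (α + t) (n - k) * poch (α - t + k) (n - k)
      / ((Nat.factorial k : ℂ) * (Nat.factorial (n - k) : ℂ))

lemma poch_prod (a : ℂ) (m : ℕ) : poch a m = ∏ i ∈ Finset.range m, (a + i) := by
  induction m with
  | zero => simp [poch]
  | succ m ih =>
      rw [Finset.prod_range_succ, ← ih]
      simp [poch, ascPochhammer_succ_right]

lemma poch_reflect (a : ℂ) (m : ℕ) :
    poch (1 - a - m) m = (-1 : ℂ) ^ m * poch a m := by
  rw [poch_prod, poch_prod, ← Finset.prod_range_reflect]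
  rw [Finset.pow_eq_prod_const, ← Finset.prod_mul_distrib]
  apply Finset.prod_congr rfl
  intro i hi
  have hi' : i < m := Finset.mem_range.mp hi
  have : ((m - 1 - i : ℕ) : ℂ) = (m : ℂ) - 1 - i := by
    have h1 : i ≤ m - 1 := Nat.le_sub_one_of_lt hi'
    push_cast [Nat.cast_sub h1, Nat.cast_sub (Nat.one_le_of_lt (Nat.lt_of_le_of_lt (Nat.zero_le i) hi'))]
    ring
  rw [this]
  ring

theorem Ba_symmetry (n : ℕ) (α t : ℂ) :
    Ba (1 - (n : ℂ) - α) t n = Ba α t n := by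
  unfold Ba
  congr 1
  apply Finset.sum_congr rfl
  intro k hk
  have hk' : k ≤ n := Nat.lt_succ_iff.mp (Finset.mem_range.mp hk)
  have hc : ((n - k : ℕ) : ℂ) = (n : ℂ) - k := by
    push_cast [Nat.cast_sub hk']; ring
  have h1 : poch (1 - (n : ℂ) - α + t) (n - k) = (-1 : ℂ) ^ (n - k) * poch (α - t + k) (n - k) := by
    have := poch_reflect (α - t + k) (n - k)
    rw [hc] at this
    rw [← this]
    ring_nf
  have h2 : poch (1 - (n : ℂ) - α - t + k) (n - k) = (-1 : ℂ) ^ (n - k) * poch (α + t) (n - k) := by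
    have := poch_reflect (α + t) (n - k)
    rw [hc] at this
    rw [← this]
    ring_nf
  rw [h1, h2]
  have hsq : ((-1 : ℂ) ^ (n - k)) * ((-1 : ℂ) ^ (n - k)) = 1 := by
    rw [← pow_add, ← two_mul, pow_mul]; norm_num
  have hrw : ∀ x y a b : ℂ,
      x * y * ((-1 : ℂ) ^ (n - k) * a) * ((-1 : ℂ) ^ (n - k) * b)
        = ((-1 : ℂ) ^ (n - k) * (-1 : ℂ) ^ (n - k)) * (x * y * b * a) := fun x y a b => by ring
  rw [hrw, hsq, one_mul]
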